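/- Suppose the underlying matrix M has a unique optimal injective assignment π₁, and let Δ_min = f(M, π₁) − max over injective π ≠ π₁ of f(M, π), with Δ_min > 0. Let M̂ satisfy |M[n,k] − M̂[n,k]| ≤ ε/(2N) for all n, k, and define Δ̂_min analogously for M̂ (difference between its best and second-best assignment values). Then |Δ_min − Δ̂_min| ≤ ε. -/

import Mathlib

open Finset

theorem stmt_4 (N K : ℕ) (hN : 0 < N) (hNK : N ≤ K) (hTwo : N < K ∨ 2 ≤ N)
    (ε : ℝ) (hε : 0 ≤ ε)
    (M M' : Fin N → Fin K → ℝ)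
    (hclose : ∀ n k, |M n k - M' n k| ≤ ε / (2 * N))
    (π₁ π₂ πh₁ πh₂ : Fin N → Fin K)
    (hπ₁ : Function.Injective π₁) (hπ₂ : Function.Injective π₂)
    (hπh₁ : Function.Injective πh₁) (hπh₂ : Function.Injective πh₂)
    -- π₁ is the unique maximizer of f(M, ·)
    (hopt : ∀ σ : Fin N → Fin K, Function.Injective σ →
      ∑ n, M n (σ n) ≤ ∑ n, M n (π₁ n))
    (huniq : ∀ σ : Fin N → Fin K, Function.Injective σ → σ ≠ π₁ →
      ∑ n, M n (σ n) < ∑ n, M n (π₁ n))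
    -- π₂ is a best assignment among those different from π₁
    (hπ₂ne : π₂ ≠ π₁)
    (hsec : ∀ σ : Fin N → Fin K, Function.Injective σ → σ ≠ π₁ →
      ∑ n, M n (σ n) ≤ ∑ n, M n (π₂ n))
    -- πh₁ maximizes f(M', ·) and πh₂ is a best assignment ≠ πh₁
    (hopth : ∀ σ : Fin N → Fin K, Function.Injective σ →
      ∑ n, M' n (σ n) ≤ ∑ n, M' n (πh₁ n))
    (hπh₂ne : πh₂ ≠ πh₁)
    (hsech : ∀ σ : Fin N → Fin K, Function.Injective σ → σ ≠ πh₁ →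
      ∑ n, M' n (σ n) ≤ ∑ n, M' n (πh₂ n))
    (Δmin Δhmin : ℝ)
    (hΔ : Δmin = (∑ n, M n (π₁ n)) - ∑ n, M n (π₂ n))
    (hΔpos : 0 < Δmin)
    (hΔh : Δhmin = (∑ n, M' n (πh₁ n)) - ∑ n, M' n (πh₂ n)) :
    |Δmin - Δhmin| ≤ ε := by 
  have hsum : ∀ σ : Fin N → Fin K, |(∑ n, M n (σ n)) - ∑ n, M' n (σ n)| ≤ ε / 2 := by
    intro σ
    have h1 : (∑ n, M n (σ n)) - ∑ n, M' n (σ n) = ∑ n, (M n (σ n) - M' n (σ n)) := by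
      rw [Finset.sum_sub_distrib]
    rw [h1]
    calc |∑ n, (M n (σ n) - M' n (σ n))| ≤ ∑ n, |M n (σ n) - M' n (σ n)| :=
          Finset.abs_sum_le_sum_abs _ _
      _ ≤ ∑ _n : Fin N, ε / (2 * N) := Finset.sum_le_sum fun n _ => hclose n (σ n)
      _ = N * (ε / (2 * N)) := by simp [Finset.sum_const, mul_comm]
      _ = ε / 2 := by
          have hN' : (N : ℝ) ≠ 0 := Nat.cast_ne_zero.mpr hN.ne'
          field_simp
  have b1 := abs_le.mp (hsum π₁)
  have b2 := abs_le.mp (hsum π₂)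
  have bh1 := abs_le.mp (hsum πh₁)
  have bh2 := abs_le.mp (hsum πh₂)
  have hΔh0 : 0 ≤ Δhmin := by
    rw [hΔh]; have := hopth πh₂ hπh₂; linarith
  rw [abs_sub_le_iff]
  constructor
  · -- Δmin - Δhmin ≤ ε
    by_cases hc : πh₂ = π₁
    · -- then πh₁ ≠ π₁, so f(πh₁) ≤ f(π₂); and g(πh₁) ≥ g(π₁)
      have hne : πh₁ ≠ π₁ := fun h => hπh₂ne (hc.trans h.symm)
      have h1 := hsec πh₁ hπh₁ hne
      have h2 := hopth π₁ hπ₁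
      subst hΔ hΔh
      linarith
    · have h1 := hsec πh₂ hπh₂ hc
      have h2 := hopth π₁ hπ₁
      subst hΔ hΔh
      linarith
  · -- Δhmin - Δmin ≤ ε
    by_cases hc : πh₁ = π₁
    · have hne : π₂ ≠ πh₁ := fun h => hπ₂ne (h.trans hc)
      have h1 := hsech π₂ hπ₂ hne
      subst hΔ hΔh hc
      linarith
    · have h1 := hsec πh₁ hπh₁ hc
      have h2 := hsech π₁ hπ₁ (fun h => hc h.symm)
      subst hΔ hΔh
      linarith
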